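/- For 0 < p < 1/2 and q = 1 - p, the BSC capacity C satisfies 2·ln(2)·C ≥ (q - p)². Consequently C - (q-p)²/3 ≥ ((3 - 2·ln 2)/(6·ln 2))·(q - p)² > 0 whenever p ≠ 1/2. -/

import Mathlib

open Real Set

private lemma aux_mem_compl {x : ℝ} (hx : 0 < x) : x ∈ ({0}ᶜ : Set ℝ) := by
  simp only [mem_compl_iff, mem_singleton_iff]
  exact hx.ne'

private lemma aux_d_log_add (x : ℝ) (h1 : (0:ℝ) < 1 + x) :
    HasDerivAt (fun y : ℝ => Real.log (1 + y)) ((1 + x)⁻¹) x := by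
  simpa [Function.comp_def] using (Real.hasDerivAt_log h1.ne').comp x ((hasDerivAt_id x).const_add 1)

private lemma aux_d_log_sub (x : ℝ) (h2 : (0:ℝ) < 1 - x) :
    HasDerivAt (fun y : ℝ => Real.log (1 - y)) (-(1 - x)⁻¹) x := by
  simpa [Function.comp_def, sub_eq_add_neg] using (Real.hasDerivAt_log h2.ne').comp x ((hasDerivAt_id x).neg.const_add 1)

private lemma aux_h_deriv (x : ℝ) (h1 : (0:ℝ) < 1 + x) (h2 : (0:ℝ) < 1 - x) :
    HasDerivAt (fun y : ℝ => Real.log (1 + y) - Real.log (1 - y) - 2 * y)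
      ((1 + x)⁻¹ - (-(1 - x)⁻¹) - 2) x := by
  exact ((aux_d_log_add x h1).sub (aux_d_log_sub x h2)).sub
    (by simpa using (hasDerivAt_id x).const_mul 2)

private lemma aux_h_nonneg (t : ℝ) (ht0 : 0 ≤ t) (ht1 : t < 1) :
    0 ≤ Real.log (1 + t) - Real.log (1 - t) - 2 * t := by
  set h : ℝ → ℝ := fun x => Real.log (1 + x) - Real.log (1 - x) - 2 * x with hh
  have hmono : MonotoneOn h (Ico 0 1) := by
    apply monotoneOn_of_deriv_nonneg (convex_Ico 0 1)
    · apply ContinuousOn.sub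
      apply ContinuousOn.sub
      · exact (Real.continuousOn_log.comp (by fun_prop)
          (fun x hx => by simp only [mem_Ico] at hx; exact aux_mem_compl (by linarith [hx.1])))
      · exact (Real.continuousOn_log.comp (by fun_prop)
          (fun x hx => by simp only [mem_Ico] at hx; exact aux_mem_compl (by linarith [hx.2])))
      · fun_prop
    · intro x hx
      rw [interior_Ico] at hx
      exact (aux_h_deriv x (by linarith [hx.1]) (by linarith [hx.2])).differentiableAt.differentiableWithinAt
    · intro x hx
      rw [interior_Ico] at hx
      have h1 : (0:ℝ) < 1 + x := by linarith [hx.1]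
      have h2 : (0:ℝ) < 1 - x := by linarith [hx.2]
      rw [(aux_h_deriv x h1 h2).deriv]
      have key : (1 + x)⁻¹ - (-(1 - x)⁻¹) - 2 = 2 * x ^ 2 / ((1 + x) * (1 - x)) := by
        field_simp
        ring
      rw [key]
      positivity
  have h0 : h 0 = 0 := by simp [hh]
  have := hmono (by simp : (0:ℝ) ∈ Ico (0:ℝ) 1) ⟨ht0, ht1⟩ ht0
  rw [h0] at this
  exact this

private lemma aux_key (t : ℝ) (ht0 : 0 ≤ t) (ht1 : t < 1) :
    t ^ 2 ≤ (1 + t) * Real.log (1 + t) + (1 - t) * Real.log (1 - t) := by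
  set g : ℝ → ℝ := fun x => (1 + x) * Real.log (1 + x) + (1 - x) * Real.log (1 - x) - x ^ 2
    with hg
  have hderiv : ∀ x ∈ Ioo (0:ℝ) 1, HasDerivAt g
      (Real.log (1 + x) - Real.log (1 - x) - 2 * x) x := by
    intro x hx
    have h1 : (0:ℝ) < 1 + x := by linarith [hx.1]
    have h2 : (0:ℝ) < 1 - x := by linarith [hx.2]
    have d1 : HasDerivAt (fun y : ℝ => (1 + y) * Real.log (1 + y))
        (1 * Real.log (1 + x) + (1 + x) * (1 + x)⁻¹) x :=
      HasDerivAt.mul (by simpa using (hasDerivAt_id x).const_add 1) (aux_d_log_add x h1)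
    have d2 : HasDerivAt (fun y : ℝ => (1 - y) * Real.log (1 - y))
        ((-1) * Real.log (1 - x) + (1 - x) * (-(1 - x)⁻¹)) x :=
      HasDerivAt.mul (by simpa using ((hasDerivAt_id x).const_sub 1)) (aux_d_log_sub x h2)
    have d3 : HasDerivAt (fun y : ℝ => y ^ 2) (2 * x) x := by
      simpa using hasDerivAt_pow 2 x
    have := (d1.add d2).sub d3
    refine this.congr_deriv ?_
    rw [mul_inv_cancel₀ h1.ne', mul_neg, mul_inv_cancel₀ h2.ne']
    ring
  have hcont : ContinuousOn g (Ico 0 1) := by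
    apply ContinuousOn.sub
    apply ContinuousOn.add
    · apply ContinuousOn.mul (by fun_prop)
      exact (Real.continuousOn_log.comp (by fun_prop)
        (fun x hx => by simp only [mem_Ico] at hx; exact aux_mem_compl (by linarith [hx.1])))
    · apply ContinuousOn.mul (by fun_prop)
      exact (Real.continuousOn_log.comp (by fun_prop)
        (fun x hx => by simp only [mem_Ico] at hx; exact aux_mem_compl (by linarith [hx.2])))
    · fun_prop
  have hmono : MonotoneOn g (Ico 0 1) := by
    apply monotoneOn_of_deriv_nonneg (convex_Ico 0 1) hcont
    · intro x hx
      rw [interior_Ico] at hx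
      exact (hderiv x hx).differentiableAt.differentiableWithinAt
    · intro x hx
      rw [interior_Ico] at hx
      rw [(hderiv x hx).deriv]
      exact aux_h_nonneg x hx.1.le hx.2
  have h0 : g 0 = 0 := by simp [hg]
  have := hmono (by simp : (0:ℝ) ∈ Ico (0:ℝ) 1) ⟨ht0, ht1⟩ ht0
  rw [h0] at this
  simp only [hg] at this
  linarith

theorem bsc_capacity_quadratic_lb (p q C : ℝ)
    (hp0 : 0 < p) (hp2 : p < 1/2) (hq : q = 1 - p)
    (hC : C = 1 + p * Real.logb 2 p + q * Real.logb 2 q) :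
    2 * Real.log 2 * C ≥ (q - p)^2 ∧
    C - (q - p)^2 / 3 ≥ ((3 - 2 * Real.log 2) / (6 * Real.log 2)) * (q - p)^2 ∧
    0 < ((3 - 2 * Real.log 2) / (6 * Real.log 2)) * (q - p)^2 := by
  have hlog2 : (0:ℝ) < Real.log 2 := Real.log_pos (by norm_num)
  set t : ℝ := q - p with ht
  clear_value t
  have ht0 : 0 < t := by rw [ht, hq]; linarith
  have ht1 : t < 1 := by rw [ht, hq]; linarith
  have hq0 : 0 < q := by rw [hq]; linarith
  have hkey := aux_key t ht0.le ht1
  have hp' : p = (1 - t) / 2 := by rw [ht, hq]; ring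
  have hq' : q = (1 + t) / 2 := by rw [ht, hq]; ring
  have hClog : Real.log 2 * C =
      ((1 + t) * Real.log (1 + t) + (1 - t) * Real.log (1 - t)) / 2 := by
    have hlp : Real.log p = Real.log (1 - t) - Real.log 2 := by
      rw [hp', Real.log_div (by linarith) (by norm_num)]
    have hlq : Real.log q = Real.log (1 + t) - Real.log 2 := by
      rw [hq', Real.log_div (by linarith) (by norm_num)]
    rw [hC]
    simp only [Real.logb, div_eq_mul_inv]
    have hl2 : Real.log 2 ≠ 0 := hlog2.ne'
    field_simp
    rw [hlp, hlq, hp', hq']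
    ring
  have hmain : 2 * Real.log 2 * C ≥ t ^ 2 := by
    have h2 : 2 * Real.log 2 * C = 2 * (Real.log 2 * C) := by ring
    rw [h2, hClog]
    linarith
  refine ⟨hmain, ?_, ?_⟩
  · have hCge : C ≥ t ^ 2 / (2 * Real.log 2) := by
      rw [ge_iff_le, div_le_iff₀ (by positivity)]
      nlinarith [hmain]
    have heq : t ^ 2 / (2 * Real.log 2) - t ^ 2 / 3 =
        ((3 - 2 * Real.log 2) / (6 * Real.log 2)) * t ^ 2 := by
      field_simp
      ring
    linarith [hCge, heq.ge]
  · have hlt : Real.log 2 < 1 := by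
      have := Real.log_two_lt_d9
      linarith
    have : (0:ℝ) < 3 - 2 * Real.log 2 := by linarith
    positivity
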